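/- If F is a Set-functor such that for all sets A₁, A₂ the canonical map δ = (Fπ₁, Fπ₂) : F(A₁ × A₂) → F(A₁) × F(A₂) is surjective, then either F(1) has exactly one element or F(X) = ∅ for every set X. -/

import Mathlib

open CategoryTheory

universe u

theorem delta_surjective_implies_connected_or_trivial
    (F : Type u ⥤ Type u)
    (h : ∀ A₁ A₂ : Type u,
      Function.Surjective (fun u : F.obj (A₁ × A₂) =>
        (F.map (TypeCat.ofHom (Prod.fst : A₁ × A₂ → A₁)) u, F.map (TypeCat.ofHom (Prod.snd : A₁ × A₂ → A₂)) u))) :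
    Nonempty (F.obj (PUnit : Type u) ≃ PUnit) ∨ ∀ X : Type u, IsEmpty (F.obj X) := by
  by_cases hne : Nonempty (F.obj (PUnit : Type u))
  · left
    have hsub : ∀ x y : F.obj (PUnit : Type u), x = y := by
      intro x y
      obtain ⟨u, hu⟩ := h PUnit PUnit (x, y)
      have h1 : (Prod.fst : PUnit × PUnit → PUnit) = Prod.snd := by
        funext p; rfl
      have hx : F.map (TypeCat.ofHom (Prod.fst : PUnit × PUnit → PUnit)) u = x := congrArg Prod.fst hu
      have hy : F.map (TypeCat.ofHom (Prod.snd : PUnit × PUnit → PUnit)) u = y := congrArg Prod.snd hu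
      rw [← hx, ← hy, h1]
    haveI : Subsingleton (F.obj (PUnit : Type u)) := ⟨hsub⟩
    haveI : Unique (F.obj (PUnit : Type u)) := uniqueOfSubsingleton hne.some
    exact ⟨Equiv.equivPUnit _⟩
  · right
    intro X
    constructor
    intro x
    exact hne ⟨F.map (TypeCat.ofHom (fun _ => PUnit.unit : X → PUnit)) x⟩
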